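/- Fix r₀ ∈ ℕ and γ ∈ [0,1). There exist c > 0 and M₀ ∈ ℕ such that for all M ≥ M₀, Σ_{r=r₀}^M (1/√r) · C(M,r) (1−γ)^r γ^{M−r} ≥ c / √((1−γ) M). -/

import Mathlib

open Finset Real

theorem stmt_4 (r₀ : ℕ) (γ : ℝ) (hγ : γ ∈ Set.Ico (0:ℝ) 1) :
    ∃ c > (0:ℝ), ∃ M₀ : ℕ, ∀ M ≥ M₀,
      c / Real.sqrt ((1 - γ) * M) ≤
        ∑ r ∈ Icc r₀ M,
          (1 / Real.sqrt r) * (Nat.choose M r : ℝ) * (1 - γ) ^ r * γ ^ (M - r) := by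
  obtain ⟨hγ0, hγ1⟩ := hγ
  set p : ℝ := 1 - γ with hpdef
  have hp0 : 0 < p := by simp only [hpdef]; linarith
  have hp1 : p ≤ 1 := by simp only [hpdef]; linarith
  set s : ℕ := max r₀ 1 with hs
  have hs1 : 1 ≤ s := le_max_right _ _
  have hrs : r₀ ≤ s := le_max_left _ _
  -- the tail of the binomial distribution tends to 0
  have htail : Filter.Tendsto
      (fun M : ℕ => ∑ r ∈ range s, (Nat.choose M r : ℝ) * p ^ r * γ ^ (M - r))
      Filter.atTop (nhds 0) := by
    have h0 : (0:ℝ) = ∑ _r ∈ range s, (0:ℝ) := by simp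
    rw [h0]
    refine tendsto_finset_sum _ (fun r _ => ?_)
    rcases eq_or_lt_of_le hγ0 with hγz | hγpos
    · -- γ = 0 : terms are eventually 0
      refine Filter.Tendsto.congr' ?_ tendsto_const_nhds
      filter_upwards [Filter.eventually_ge_atTop (r + 1)] with M hM
      have : M - r ≠ 0 := by omega
      rw [← hγz, zero_pow this, mul_zero]
    · -- γ > 0 : squeeze by const * (M^r * γ^M)
      have hlim : Filter.Tendsto (fun M : ℕ => p ^ r / γ ^ r * ((M : ℝ) ^ r * γ ^ M))
          Filter.atTop (nhds 0) := by
        have := (tendsto_pow_const_mul_const_pow_of_lt_one r hγ0 hγ1).const_mul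
          (p ^ r / γ ^ r)
        simpa using this
      refine squeeze_zero' ?_ ?_ hlim
      · filter_upwards with M
        positivity
      · filter_upwards [Filter.eventually_ge_atTop r] with M hM
        have hC : ((Nat.choose M r : ℕ) : ℝ) ≤ (M : ℝ) ^ r := by
          exact_mod_cast Nat.cast_le.mpr (Nat.choose_le_pow M r) |>.trans_eq (by push_cast; ring)
        have hpow : γ ^ (M - r) = γ ^ M / γ ^ r := by
          rw [eq_div_iff (by positivity), ← pow_add]
          congr 1; omega
        calc (Nat.choose M r : ℝ) * p ^ r * γ ^ (M - r)
            ≤ (M : ℝ) ^ r * p ^ r * γ ^ (M - r) := by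
              apply mul_le_mul_of_nonneg_right (mul_le_mul_of_nonneg_right hC (by positivity))
              positivity
          _ = p ^ r / γ ^ r * ((M : ℝ) ^ r * γ ^ M) := by
              rw [hpow]; field_simp
  -- eventually the tail is ≤ 1/2
  have hev : ∀ᶠ M : ℕ in Filter.atTop,
      ∑ r ∈ range s, (Nat.choose M r : ℝ) * p ^ r * γ ^ (M - r) ≤ 1 / 2 :=
    htail.eventually (eventually_le_nhds (by norm_num))
  obtain ⟨M₁, hM₁⟩ := Filter.eventually_atTop.mp hev
  refine ⟨Real.sqrt p / 2, by positivity, max M₁ s, fun M hM => ?_⟩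
  have hMs : s ≤ M := le_trans (le_max_right _ _) hM
  have hMM₁ : M₁ ≤ M := le_trans (le_max_left _ _) hM
  have hM1 : 1 ≤ M := le_trans hs1 hMs
  have hMpos : (0:ℝ) < (M : ℝ) := by exact_mod_cast Nat.lt_of_lt_of_le Nat.zero_lt_one hM1
  -- total sum is 1
  have htotal : ∑ r ∈ range (M + 1), (Nat.choose M r : ℝ) * p ^ r * γ ^ (M - r) = 1 := by
    have hpg : p + γ = 1 := by simp [hpdef]
    calc ∑ r ∈ range (M + 1), (Nat.choose M r : ℝ) * p ^ r * γ ^ (M - r)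
        = ∑ r ∈ range (M + 1), p ^ r * γ ^ (M - r) * (Nat.choose M r : ℝ) :=
          Finset.sum_congr rfl (fun r _ => by ring)
      _ = (p + γ) ^ M := (add_pow p γ M).symm
      _ = 1 := by rw [hpg, one_pow]
  -- split
  have hsplit : ∑ r ∈ Icc s M, (Nat.choose M r : ℝ) * p ^ r * γ ^ (M - r) =
      1 - ∑ r ∈ range s, (Nat.choose M r : ℝ) * p ^ r * γ ^ (M - r) := by
    rw [← htotal, ← Finset.Ico_add_one_right_eq_Icc, Finset.range_eq_Ico,
      ← Finset.sum_Ico_consecutive _ (Nat.zero_le s) (by omega :  s ≤ M + 1)]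
    rw [Finset.range_eq_Ico]
    ring
  have hhalf : 1 / 2 ≤ ∑ r ∈ Icc s M, (Nat.choose M r : ℝ) * p ^ r * γ ^ (M - r) := by
    rw [hsplit]
    have := hM₁ M hMM₁
    linarith
  -- lower bound the target sum
  have hstep : 1 / Real.sqrt M * (1 / 2) ≤
      ∑ r ∈ Icc r₀ M, (1 / Real.sqrt r) * (Nat.choose M r : ℝ) * p ^ r * γ ^ (M - r) := by
    calc 1 / Real.sqrt M * (1 / 2)
        ≤ 1 / Real.sqrt M * ∑ r ∈ Icc s M, (Nat.choose M r : ℝ) * p ^ r * γ ^ (M - r) := by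
          apply mul_le_mul_of_nonneg_left hhalf
          positivity
      _ = ∑ r ∈ Icc s M, (1 / Real.sqrt M) * ((Nat.choose M r : ℝ) * p ^ r * γ ^ (M - r)) :=
          Finset.mul_sum _ _ _
      _ ≤ ∑ r ∈ Icc s M, (1 / Real.sqrt r) * (Nat.choose M r : ℝ) * p ^ r * γ ^ (M - r) := by
          refine Finset.sum_le_sum (fun r hr => ?_)
          obtain ⟨hr1, hr2⟩ := Finset.mem_Icc.mp hr
          have hrpos : (0:ℝ) < Real.sqrt r := Real.sqrt_pos.mpr
            (by exact_mod_cast Nat.lt_of_lt_of_le Nat.zero_lt_one (le_trans hs1 hr1))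
          have hle : 1 / Real.sqrt M ≤ 1 / Real.sqrt r := by
            apply one_div_le_one_div_of_le hrpos
            exact Real.sqrt_le_sqrt (by exact_mod_cast hr2)
          have := mul_le_mul_of_nonneg_right hle
            (show (0:ℝ) ≤ (Nat.choose M r : ℝ) * p ^ r * γ ^ (M - r) by positivity)
          linarith [this]
      _ ≤ ∑ r ∈ Icc r₀ M, (1 / Real.sqrt r) * (Nat.choose M r : ℝ) * p ^ r * γ ^ (M - r) := by
          refine Finset.sum_le_sum_of_subset_of_nonneg ?_ (fun r _ _ => by positivity)
          exact Finset.Icc_subset_Icc_left hrs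
  -- conclude
  have hc : Real.sqrt p / 2 / Real.sqrt (p * M) = 1 / Real.sqrt M * (1 / 2) := by
    rw [Real.sqrt_mul (le_of_lt hp0)]
    have hsp : (0:ℝ) < Real.sqrt p := Real.sqrt_pos.mpr hp0
    have hsM : (0:ℝ) < Real.sqrt M := Real.sqrt_pos.mpr hMpos
    field_simp
  rw [hc]
  exact hstep
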